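/- arXiv:0902.0912 — 3 statements merged into one kernel-verified Lean document; each statement's English description precedes it below -/
import Mathlib

section
/- Conversely, if there exists an isometry U : A'B' → CD with (1_{AB} ⊗ U) ρ_{ABA'B'} (1_{AB} ⊗ U)† = ψ_{ABC} ⊗ ρ_D for a pure state ψ_{ABC}, then for any purification ψ_{RABA'B'} of ρ_{ABA'B'} the reduced state on ABR is product: ρ_{ABR} = ρ_{AB} ⊗ ρ_R. -/
open Classical Matrix Kronecker ComplexOrder
noncomputable section

/-- von Neumann entropy (in nats) of a matrix, via its eigenvalues if Hermitian. -/
def vN {n : Type*} [Fintype n] [DecidableEq n] (ρ : Matrix n n ℂ) : ℝ :=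
  if h : ρ.IsHermitian then ∑ i, Real.negMulLog (h.eigenvalues i) else 0

/-- A density matrix: positive semidefinite with unit trace. -/
def IsDensity {n : Type*} [Fintype n] (ρ : Matrix n n ℂ) : Prop :=
  ρ.PosSemidef ∧ ρ.trace = 1

/-- Partial trace over the second tensor factor. -/
def ptrR {A B : Type*} [Fintype B] (ρ : Matrix (A × B) (A × B) ℂ) : Matrix A A ℂ :=
  fun i j => ∑ k, ρ (i, k) (j, k)

/-- Partial trace over the first tensor factor. -/
def ptrL {A B : Type*} [Fintype A] (ρ : Matrix (A × B) (A × B) ℂ) : Matrix B B ℂ :=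
  fun i j => ∑ k, ρ (k, i) (k, j)

/-- Rank-one projection onto the (unnormalized) vector ψ. -/
def pureProj {n : Type*} (ψ : n → ℂ) : Matrix n n ℂ := fun i j => ψ i * star (ψ j)

/-- Partial trace over the middle system of a tripartite state on (A ⊗ B) ⊗ C. -/
def ptrMid {A B C : Type*} [Fintype B] (M : Matrix ((A × B) × C) ((A × B) × C) ℂ) :
    Matrix (A × C) (A × C) ℂ :=
  fun p q => ∑ b, M ((p.1, b), p.2) ((q.1, b), q.2)

/- ### Auxiliary lemmas -/

private lemma sum_mul_conj_eq_one' {n : Type*} [Fintype n] (φ : n → ℂ)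
    (hφ : ∑ i, ‖φ i‖ ^ 2 = 1) : ∑ i, φ i * star (φ i) = 1 := by
  have h1 : ∀ i, φ i * star (φ i) = ((‖φ i‖ ^ 2 : ℝ) : ℂ) := by
    intro i
    rw [Complex.star_def, Complex.mul_conj]
    norm_cast
    rw [Complex.normSq_eq_norm_sq]
  simp only [h1]
  rw [← Complex.ofReal_sum, hφ, Complex.ofReal_one]

private lemma sum_comm3' {α β γ : Type*} [Fintype α] [Fintype β] [Fintype γ]
    (f : α → β → γ → ℂ) :
    ∑ a, ∑ b, ∑ c, f a b c = ∑ b, ∑ c, ∑ a, f a b c := by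
  rw [Finset.sum_comm]
  exact Finset.sum_congr rfl fun b _ => Finset.sum_comm

private lemma sum_comm4' {α β γ δ : Type*} [Fintype α] [Fintype β] [Fintype γ] [Fintype δ]
    (f : α → β → γ → δ → ℂ) :
    ∑ a, ∑ b, ∑ c, ∑ d, f a b c d = ∑ c, ∑ d, ∑ a, ∑ b, f a b c d := by
  have h1 : ∀ a, ∑ b, ∑ c, ∑ d, f a b c d = ∑ c, ∑ d, ∑ b, f a b c d := fun a =>
    sum_comm3' fun b c d => f a b c d
  calc ∑ a, ∑ b, ∑ c, ∑ d, f a b c d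
      = ∑ a, ∑ c, ∑ d, ∑ b, f a b c d := Finset.sum_congr rfl fun a _ => h1 a
    _ = ∑ c, ∑ d, ∑ a, ∑ b, f a b c d := sum_comm3' fun a c d => ∑ b, f a b c d

private lemma pure_factor' {X Y : Type*} [Fintype X] [Fintype Y] (ψ : X × Y → ℂ) (φ : X → ℂ)
    (hnorm : ∑ x, φ x * star (φ x) = 1)
    (h : ∀ x x', ∑ y, ψ (x, y) * star (ψ (x', y)) = φ x * star (φ x')) :
    ∀ x y, ψ (x, y) = φ x * ∑ x', star (φ x') * ψ (x', y) := by
  set χ : Y → ℂ := fun y => ∑ x', star (φ x') * ψ (x', y) with hχ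
  have hT : ∑ y, χ y * star (χ y) = 1 := by
    have hexp : ∀ y, χ y * star (χ y)
        = ∑ x, ∑ x', (star (φ x) * ψ (x, y)) * (φ x' * star (ψ (x', y))) := by
      intro y
      rw [hχ]
      rw [star_sum, Finset.sum_mul_sum]
      simp [star_mul', mul_comm]
    calc ∑ y, χ y * star (χ y)
        = ∑ y, ∑ x, ∑ x', (star (φ x) * ψ (x, y)) * (φ x' * star (ψ (x', y))) := by
          exact Finset.sum_congr rfl fun y _ => hexp y
      _ = ∑ x, ∑ x', ∑ y, (star (φ x) * ψ (x, y)) * (φ x' * star (ψ (x', y))) := by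
          rw [Finset.sum_comm]
          exact Finset.sum_congr rfl fun x _ => Finset.sum_comm
      _ = ∑ x, ∑ x', (star (φ x) * φ x') * ∑ y, ψ (x, y) * star (ψ (x', y)) := by
          refine Finset.sum_congr rfl fun x _ => Finset.sum_congr rfl fun x' _ => ?_
          rw [Finset.mul_sum]; exact Finset.sum_congr rfl fun y _ => by ring
      _ = ∑ x, ∑ x', (star (φ x) * φ x') * (φ x * star (φ x')) := by
          refine Finset.sum_congr rfl fun x _ => Finset.sum_congr rfl fun x' _ => ?_
          rw [h]
      _ = (∑ x, φ x * star (φ x)) * (∑ x', φ x' * star (φ x')) := by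
          rw [Finset.sum_mul]
          refine Finset.sum_congr rfl fun x _ => ?_
          rw [Finset.mul_sum]
          exact Finset.sum_congr rfl fun x' _ => by ring
      _ = 1 := by rw [hnorm]; ring
  have hS1 : ∑ x, ∑ y, ψ (x, y) * star (ψ (x, y)) = 1 := by
    rw [Finset.sum_congr rfl fun x _ => h x x, hnorm]
  have hS2 : ∑ x, ∑ y, ψ (x, y) * star (φ x * χ y) = 1 := by
    calc ∑ x, ∑ y, ψ (x, y) * star (φ x * χ y)
        = ∑ y, ∑ x, star (χ y) * (star (φ x) * ψ (x, y)) := by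
          rw [Finset.sum_comm]
          exact Finset.sum_congr rfl fun y _ => Finset.sum_congr rfl fun x _ => by
            simp [star_mul']; ring
      _ = ∑ y, χ y * star (χ y) := by
          refine Finset.sum_congr rfl fun y _ => ?_
          rw [← Finset.mul_sum]
          exact mul_comm _ _
      _ = 1 := hT
  have hS3 : ∑ x, ∑ y, (φ x * χ y) * star (ψ (x, y)) = 1 := by
    have := congrArg star hS2
    simpa [star_sum, star_mul', mul_comm] using this
  have hS4 : ∑ x, ∑ y, (φ x * χ y) * star (φ x * χ y) = 1 := by
    calc ∑ x, ∑ y, (φ x * χ y) * star (φ x * χ y)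
        = ∑ x, (φ x * star (φ x)) * ∑ y, χ y * star (χ y) := by
          refine Finset.sum_congr rfl fun x _ => ?_
          rw [Finset.mul_sum]
          exact Finset.sum_congr rfl fun y _ => by simp [star_mul']; ring
      _ = 1 := by rw [hT]; simpa using hnorm
  have hE : ∑ x, ∑ y, (ψ (x, y) - φ x * χ y) * star (ψ (x, y) - φ x * χ y) = 0 := by
    have expand : ∀ x y, (ψ (x, y) - φ x * χ y) * star (ψ (x, y) - φ x * χ y)
        = ψ (x, y) * star (ψ (x, y)) - ψ (x, y) * star (φ x * χ y)
          - (φ x * χ y) * star (ψ (x, y)) + (φ x * χ y) * star (φ x * χ y) := by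
      intro x y; rw [star_sub]; ring
    calc ∑ x, ∑ y, (ψ (x, y) - φ x * χ y) * star (ψ (x, y) - φ x * χ y)
        = ∑ x, ∑ y, (ψ (x, y) * star (ψ (x, y)) - ψ (x, y) * star (φ x * χ y)
          - (φ x * χ y) * star (ψ (x, y)) + (φ x * χ y) * star (φ x * χ y)) := by
          exact Finset.sum_congr rfl fun x _ => Finset.sum_congr rfl fun y _ => expand x y
      _ = (∑ x, ∑ y, ψ (x, y) * star (ψ (x, y))) - (∑ x, ∑ y, ψ (x, y) * star (φ x * χ y))
          - (∑ x, ∑ y, (φ x * χ y) * star (ψ (x, y)))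
          + (∑ x, ∑ y, (φ x * χ y) * star (φ x * χ y)) := by
          simp [Finset.sum_add_distrib, Finset.sum_sub_distrib]
      _ = 0 := by rw [hS1, hS2, hS3, hS4]; ring
  have hz : ∀ z : ℂ, z * star z = (Complex.normSq z : ℂ) := fun z => Complex.mul_conj z
  have hE' : ∑ x, ∑ y, Complex.normSq (ψ (x, y) - φ x * χ y) = 0 := by
    have : ((∑ x, ∑ y, Complex.normSq (ψ (x, y) - φ x * χ y) : ℝ) : ℂ) = 0 := by
      push_cast
      rw [← hE]
      exact Finset.sum_congr rfl fun x _ => Finset.sum_congr rfl fun y _ => (hz _).symm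
    exact_mod_cast this
  have h0 : ∀ x y, ψ (x, y) - φ x * χ y = 0 := by
    intro x y
    have h1 := (Finset.sum_eq_zero_iff_of_nonneg (fun x _ =>
      Finset.sum_nonneg fun y _ => Complex.normSq_nonneg _)).mp hE' x (Finset.mem_univ x)
    have h2 := (Finset.sum_eq_zero_iff_of_nonneg (fun y _ =>
      Complex.normSq_nonneg _)).mp h1 y (Finset.mem_univ y)
    exact Complex.normSq_eq_zero.mp h2
  intro x y
  have := h0 x y
  rw [sub_eq_zero] at this
  exact this

/-- conversely, if there is an isometry U : A'B' → CD with
(1 ⊗ U) ρ (1 ⊗ U)† = ψ_{ABC} ⊗ ρ_D (ψ_{ABC} pure), then for any purification ψ of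
ρ_{ABA'B'}, the reduced state on AB,R is product. -/
theorem stmt_3 {AB P R C D : Type*} [Fintype AB] [DecidableEq AB] [Fintype P] [DecidableEq P]
    [Fintype R] [DecidableEq R] [Fintype C] [DecidableEq C] [Fintype D] [DecidableEq D]
    (ρ : Matrix (AB × P) (AB × P) ℂ) (hρ : IsDensity ρ)
    (U : Matrix (C × D) P ℂ) (hU : Uᴴ * U = 1)
    (φ : AB × C → ℂ) (hφ : ∑ i, ‖φ i‖ ^ 2 = 1)
    (ρD : Matrix D D ℂ) (hD : IsDensity ρD)
    (hiso : Matrix.reindex (Equiv.prodAssoc AB C D).symm (Equiv.prodAssoc AB C D).symm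
        (((1 : Matrix AB AB ℂ) ⊗ₖ U) * ρ * ((1 : Matrix AB AB ℂ) ⊗ₖ U)ᴴ)
      = pureProj φ ⊗ₖ ρD)
    (ψ : (AB × P) × R → ℂ) (hpur : ptrR (pureProj ψ) = ρ) :
    ptrMid (pureProj ψ) = ptrR (ptrMid (pureProj ψ)) ⊗ₖ ptrL (ptrMid (pureProj ψ)) := by
  -- entrywise forms of hypotheses
  have hpur' : ∀ i j : AB × P, ∑ r, ψ (i, r) * star (ψ (j, r)) = ρ i j := by
    intro i j
    have := congrFun (congrFun hpur i) j
    simpa [ptrR, pureProj] using this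
  have hU' : ∀ p q : P, ∑ c, ∑ d, star (U (c, d) p) * U (c, d) q
      = if p = q then 1 else 0 := by
    intro p q
    have := congrFun (congrFun hU p) q
    simp [Matrix.mul_apply, Matrix.conjTranspose_apply, Fintype.sum_prod_type,
      Matrix.one_apply] at this
    exact this
  have hiso' : ∀ (a : AB) (c : C) (d : D) (a' : AB) (c' : C) (d' : D),
      (∑ p, ∑ q, U (c, d) p * ρ (a, p) (a', q) * star (U (c', d') q))
        = φ (a, c) * star (φ (a', c')) * ρD d d' := by
    intro a c d a' c' d'
    have := congrFun (congrFun hiso ((a, c), d)) ((a', c'), d')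
    simp [Matrix.mul_apply, Matrix.conjTranspose_apply, Fintype.sum_prod_type,
      Matrix.one_apply, pureProj, Matrix.kroneckerMap_apply, apply_ite (starRingEnd ℂ),
      mul_ite, ite_mul, mul_zero, zero_mul, map_zero, Finset.sum_ite_eq, Finset.sum_ite_eq']
      at this
    rw [Finset.sum_comm]
    simp only [← Finset.sum_mul]
    exact this
  have htrD : ∑ d, ρD d d = 1 := by simpa [Matrix.trace, Matrix.diag] using hD.2
  have htrρ : ∑ i : AB × P, ρ i i = 1 := by simpa [Matrix.trace, Matrix.diag] using hρ.2
  -- the transformed purification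
  set ψ' : (AB × C) × (D × R) → ℂ :=
    fun x => ∑ p, U (x.1.2, x.2.1) p * ψ ((x.1.1, p), x.2.2) with hψ'
  -- its marginal on AB × C is the pure state φ
  have hA : ∀ x x' : AB × C, ∑ y : D × R, ψ' (x, y) * star (ψ' (x', y))
      = φ x * star (φ x') := by
    rintro ⟨a, c⟩ ⟨a', c'⟩
    rw [Fintype.sum_prod_type]
    calc ∑ d, ∑ r, ψ' ((a, c), (d, r)) * star (ψ' ((a', c'), (d, r)))
        = ∑ d, ∑ r, ∑ p, ∑ q, (U (c, d) p * ψ ((a, p), r))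
            * (star (U (c', d) q) * star (ψ ((a', q), r))) := by
          refine Finset.sum_congr rfl fun d _ => Finset.sum_congr rfl fun r _ => ?_
          show (∑ p, U (c, d) p * ψ ((a, p), r)) * star (∑ q, U (c', d) q * ψ ((a', q), r)) = _
          rw [star_sum, Finset.sum_mul_sum]
          exact Finset.sum_congr rfl fun p _ => Finset.sum_congr rfl fun q _ => by
            rw [star_mul']
      _ = ∑ d, ∑ p, ∑ q, ∑ r, (U (c, d) p * ψ ((a, p), r))
            * (star (U (c', d) q) * star (ψ ((a', q), r))) := by
          exact Finset.sum_congr rfl fun d _ => sum_comm3' _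
      _ = ∑ d, ∑ p, ∑ q, U (c, d) p * ρ (a, p) (a', q) * star (U (c', d) q) := by
          refine Finset.sum_congr rfl fun d _ => Finset.sum_congr rfl fun p _ =>
            Finset.sum_congr rfl fun q _ => ?_
          rw [← hpur' (a, p) (a', q), Finset.mul_sum, Finset.sum_mul]
          exact Finset.sum_congr rfl fun r _ => by ring
      _ = ∑ d, φ (a, c) * star (φ (a', c')) * ρD d d := by
          exact Finset.sum_congr rfl fun d _ => hiso' a c d a' c' d
      _ = φ (a, c) * star (φ (a', c')) := by rw [← Finset.mul_sum, htrD, mul_one]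
  have hnorm : ∑ x, φ x * star (φ x) = 1 := sum_mul_conj_eq_one' φ hφ
  -- factorize ψ'
  have hfac := pure_factor' ψ' φ hnorm hA
  set χ : D × R → ℂ := fun y => ∑ x', star (φ x') * ψ' (x', y) with hχ
  -- main entrywise identity
  have hM : ∀ (a : AB) (r : R) (a' : AB) (r' : R),
      (∑ p, ψ ((a, p), r) * star (ψ ((a', p), r')))
        = (∑ c, φ (a, c) * star (φ (a', c))) * (∑ d, χ (d, r) * star (χ (d, r'))) := by
    intro a r a' r'
    have step1 : ∑ c, ∑ d, ψ' ((a, c), (d, r)) * star (ψ' ((a', c), (d, r')))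
        = ∑ p, ψ ((a, p), r) * star (ψ ((a', p), r')) := by
      calc ∑ c, ∑ d, ψ' ((a, c), (d, r)) * star (ψ' ((a', c), (d, r')))
          = ∑ c, ∑ d, ∑ p, ∑ q, (U (c, d) p * ψ ((a, p), r))
              * (star (U (c, d) q) * star (ψ ((a', q), r'))) := by
            refine Finset.sum_congr rfl fun c _ => Finset.sum_congr rfl fun d _ => ?_
            show (∑ p, U (c, d) p * ψ ((a, p), r))
                * star (∑ q, U (c, d) q * ψ ((a', q), r')) = _
            rw [star_sum, Finset.sum_mul_sum]
            exact Finset.sum_congr rfl fun p _ => Finset.sum_congr rfl fun q _ => by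
              rw [star_mul']
        _ = ∑ p, ∑ q, ∑ c, ∑ d, (U (c, d) p * ψ ((a, p), r))
              * (star (U (c, d) q) * star (ψ ((a', q), r'))) := sum_comm4' _
        _ = ∑ p, ∑ q, (∑ c, ∑ d, star (U (c, d) q) * U (c, d) p)
              * (ψ ((a, p), r) * star (ψ ((a', q), r'))) := by
            refine Finset.sum_congr rfl fun p _ => Finset.sum_congr rfl fun q _ => ?_
            rw [Finset.sum_mul]
            refine Finset.sum_congr rfl fun c _ => ?_
            rw [Finset.sum_mul]
            exact Finset.sum_congr rfl fun d _ => by ring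
        _ = ∑ p, ∑ q, (if q = p then 1 else 0)
              * (ψ ((a, p), r) * star (ψ ((a', q), r'))) := by
            refine Finset.sum_congr rfl fun p _ => Finset.sum_congr rfl fun q _ => ?_
            rw [hU' q p]
        _ = ∑ p, ψ ((a, p), r) * star (ψ ((a', p), r')) := by
            refine Finset.sum_congr rfl fun p _ => ?_
            simp
    have step2 : ∑ c, ∑ d, ψ' ((a, c), (d, r)) * star (ψ' ((a', c), (d, r')))
        = (∑ c, φ (a, c) * star (φ (a', c))) * (∑ d, χ (d, r) * star (χ (d, r'))) := by
      rw [Finset.sum_mul_sum]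
      refine Finset.sum_congr rfl fun c _ => Finset.sum_congr rfl fun d _ => ?_
      rw [hfac (a, c) (d, r), hfac (a', c) (d, r'), star_mul']
      ring
    rw [← step1, step2]
  have hs : ∑ a, ∑ c, φ (a, c) * star (φ (a, c)) = 1 := by
    rw [show (1 : ℂ) = ∑ x : AB × C, φ x * star (φ x) from hnorm.symm,
      Fintype.sum_prod_type]
  have ht : ∑ r, ∑ d, χ (d, r) * star (χ (d, r)) = 1 := by
    have h1 : ∑ a, ∑ r, (∑ c, φ (a, c) * star (φ (a, c)))
        * (∑ d, χ (d, r) * star (χ (d, r))) = 1 := by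
      calc ∑ a, ∑ r, (∑ c, φ (a, c) * star (φ (a, c))) * (∑ d, χ (d, r) * star (χ (d, r)))
          = ∑ a, ∑ r, ∑ p, ψ ((a, p), r) * star (ψ ((a, p), r)) := by
            exact Finset.sum_congr rfl fun a _ => Finset.sum_congr rfl fun r _ =>
              (hM a r a r).symm
        _ = ∑ a, ∑ p, ∑ r, ψ ((a, p), r) * star (ψ ((a, p), r)) :=
            Finset.sum_congr rfl fun a _ => Finset.sum_comm
        _ = ∑ a, ∑ p, ρ (a, p) (a, p) := Finset.sum_congr rfl fun a _ =>
            Finset.sum_congr rfl fun p _ => hpur' (a, p) (a, p)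
        _ = 1 := by
            rw [show (1 : ℂ) = ∑ i : AB × P, ρ i i from htrρ.symm, Fintype.sum_prod_type]
    have h2 : ∑ a, ∑ r, (∑ c, φ (a, c) * star (φ (a, c)))
        * (∑ d, χ (d, r) * star (χ (d, r)))
        = (∑ a, ∑ c, φ (a, c) * star (φ (a, c)))
          * (∑ r, ∑ d, χ (d, r) * star (χ (d, r))) := by
      rw [Finset.sum_mul]
      exact Finset.sum_congr rfl fun a _ => by rw [Finset.mul_sum]
    rw [h2, hs, one_mul] at h1
    exact h1
  -- conclude entrywise
  ext i j
  obtain ⟨a, r⟩ := i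
  obtain ⟨a', r'⟩ := j
  show (∑ p, ψ ((a, p), r) * star (ψ ((a', p), r')))
      = (∑ r₀, ∑ p, ψ ((a, p), r₀) * star (ψ ((a', p), r₀)))
        * (∑ a₀, ∑ p, ψ ((a₀, p), r) * star (ψ ((a₀, p), r')))
  simp only [hM]
  rw [← Finset.mul_sum, ← Finset.sum_mul, hs, ht]
  ring
end
end

section
/- The logarithmic negativity of the isotropic state ρ_iso(F,d) = F Φ_d + (1−F)(1−Φ_d)/(d²−1) on C^d ⊗ C^d satisfies E_N(ρ_iso(F,d)) = log(F d) whenever F ≥ 1/d. -/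
open Classical Matrix Kronecker ComplexOrder
noncomputable section

/-- Trace norm ‖M‖₁ = Tr √(M†M). -/
def trNorm {n : Type*} [Fintype n] [DecidableEq n] (M : Matrix n n ℂ) : ℝ :=
  (((Matrix.posSemidef_conjTranspose_mul_self M).1.eigenvectorUnitary.1 *
      Matrix.diagonal (((↑) : ℝ → ℂ) ∘ (Real.sqrt ·) ∘ (Matrix.posSemidef_conjTranspose_mul_self M).1.eigenvalues) *
      (star (Matrix.posSemidef_conjTranspose_mul_self M).1.eigenvectorUnitary : Matrix n n ℂ)).trace).re

/-- Partial transpose on the second tensor factor. -/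
def ptB {A B : Type*} (ρ : Matrix (A × B) (A × B) ℂ) : Matrix (A × B) (A × B) ℂ :=
  fun p q => ρ (p.1, q.2) (q.1, p.2)

lemma psd_smul_aux {n : Type*} [Fintype n] {A : Matrix n n ℂ} (hA : A.PosSemidef)
    {r : ℝ} (hr : 0 ≤ r) : ((r : ℂ) • A).PosSemidef := by
  constructor
  · have := hA.1
    unfold Matrix.IsHermitian at *
    rw [conjTranspose_smul, this]
    congr 1
    simp [Complex.ext_iff]
  · intro x
    exact (hA.smul (show (0:ℂ) ≤ (r:ℂ) from Complex.zero_le_real.mpr hr)).2 x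

def swapM (d : ℕ) : Matrix (Fin d × Fin d) (Fin d × Fin d) ℂ :=
  fun p q => if q = (p.2, p.1) then 1 else 0

lemma swapM_mul_swapM (d : ℕ) : swapM d * swapM d = 1 := by
  funext p q
  simp only [swapM, Matrix.mul_apply]
  rw [Finset.sum_eq_single (p.2, p.1)]
  · simp [Matrix.one_apply, Prod.ext_iff, eq_comm, and_comm]
  · intro k _ hk; simp [hk]
  · simp

lemma swapM_herm (d : ℕ) : (swapM d).IsHermitian := by
  unfold Matrix.IsHermitian
  funext p q
  simp only [swapM, conjTranspose_apply]
  by_cases h : p = (q.2, q.1)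
  · have h' : q = (p.2, p.1) := by rw [h]
    rw [if_pos h, if_pos h']
    simp
  · have h2 : ¬ q = (p.2, p.1) := fun hq => h (by rw [hq])
    rw [if_neg h, if_neg h2]
    simp

lemma swapM_trace (d : ℕ) : (swapM d).trace = d := by
  simp only [Matrix.trace, Matrix.diag, swapM]
  rw [Fintype.sum_prod_type]
  have : ∀ i : Fin d, (∑ j : Fin d,
      if ((i, j) : Fin d × Fin d) = (j, i) then (1:ℂ) else 0) = 1 := by
    intro i
    rw [Finset.sum_eq_single i]
    · simp
    · intro j _ hj
      rw [if_neg]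
      simp [Prod.ext_iff]
      intro h; exact absurd h.symm hj
    · simp
  rw [Finset.sum_congr rfl (fun i _ => this i)]
  simp

lemma expand_aux (d : ℕ) (x y : ℂ) :
    (x • swapM d + y • 1) * (x • swapM d + y • 1)
      = (2*x*y) • swapM d + (x^2 + y^2) • 1 := by
  rw [add_mul, mul_add, mul_add]
  simp only [smul_mul_assoc, mul_smul_comm, swapM_mul_swapM, Matrix.one_mul, Matrix.mul_one]
  module

lemma psd_swap_add_one (d : ℕ) : (swapM d + 1).PosSemidef := by
  set r : ℝ := (Real.sqrt 2)⁻¹ with hr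
  have key : (((r:ℂ)) • (swapM d + 1))ᴴ * (((r:ℂ)) • (swapM d + 1)) = swapM d + 1 := by
    rw [conjTranspose_smul, conjTranspose_add, swapM_herm d, conjTranspose_one]
    have hs : star ((r:ℂ)) = (r:ℂ) := by simp [Complex.ext_iff]
    rw [hs, smul_mul_assoc, mul_smul_comm, smul_smul]
    have h0 : swapM d + 1 = (1:ℂ) • swapM d + (1:ℂ) • 1 := by simp
    rw [h0, expand_aux]
    have hr2 : (r:ℂ) * (r:ℂ) = 1/2 := by
      have : (Real.sqrt 2) * (Real.sqrt 2) = 2 := Real.mul_self_sqrt (by norm_num)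
      have hne : Real.sqrt 2 ≠ 0 := by positivity
      rw [hr]
      push_cast
      field_simp
      exact_mod_cast (by rw [sq]; exact this.symm : (2:ℝ) = Real.sqrt 2 ^ 2)
    rw [smul_add, smul_smul, smul_smul, hr2]
    norm_num
  exact key ▸ Matrix.posSemidef_conjTranspose_mul_self _


/-- the logarithmic negativity of the isotropic state
ρ_iso(F,d) = F Φ_d + (1−F)(1−Φ_d)/(d²−1) equals log₂(F d) for F ≥ 1/d. -/
theorem stmt_9 {d : ℕ} (hd : 2 ≤ d) (F : ℝ) (hF1 : 1 / (d : ℝ) ≤ F) (hF2 : F ≤ 1)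
    (Φ : Matrix (Fin d × Fin d) (Fin d × Fin d) ℂ)
    (hΦ : Φ = fun p q => if p.1 = p.2 ∧ q.1 = q.2 then (1 / (d : ℂ)) else 0)
    (ρ : Matrix (Fin d × Fin d) (Fin d × Fin d) ℂ)
    (hρ : ρ = (F : ℂ) • Φ + ((1 - (F : ℂ)) / ((d : ℂ) ^ 2 - 1)) • (1 - Φ)) :
    Real.logb 2 (trNorm (ptB ρ)) = Real.logb 2 (F * d) := by
  have hdR : (2:ℝ) ≤ (d:ℝ) := by exact_mod_cast hd
  have hd0 : (d:ℝ) ≠ 0 := by linarith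
  have hd1 : (d:ℝ) - 1 ≠ 0 := by linarith
  have hd2pos : (0:ℝ) < (d:ℝ)^2 - 1 := by nlinarith
  have hd2 : (d:ℝ)^2 - 1 ≠ 0 := ne_of_gt hd2pos
  have hdC : (d:ℂ) ≠ 0 := by exact_mod_cast hd0
  have hd2C : (d:ℂ)^2 - 1 ≠ 0 := by
    have : ((d:ℂ)^2 - 1) = (((d:ℝ)^2 - 1 : ℝ) : ℂ) := by push_cast; ring
    rw [this]
    exact_mod_cast hd2
  have hFd : 1 ≤ F * d := by
    rw [div_le_iff₀ (by linarith : (0:ℝ) < d)] at hF1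
    linarith
  set c : ℝ := (1 - F) / ((d:ℝ)^2 - 1) with hc_def
  set a : ℝ := (F - c) / d with ha_def
  have hc : 0 ≤ c := div_nonneg (by linarith) (le_of_lt hd2pos)
  have hac : 0 ≤ a - c := by
    have key : a - c = (F * d - 1) / ((d:ℝ) * ((d:ℝ) - 1)) := by
      rw [ha_def, hc_def]
      field_simp
      ring
    rw [key]
    apply div_nonneg (by linarith)
    nlinarith
  -- ptB ρ = a • S + c • 1
  have hM : ptB ρ = (a:ℂ) • swapM d + (c:ℂ) • 1 := by
    funext p q
    have hΦa : ∀ x y, Φ x y = if x.1 = x.2 ∧ y.1 = y.2 then 1/(d:ℂ) else 0 := by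
      intro x y; rw [hΦ]
    simp only [ptB, hρ, hΦa, Matrix.add_apply, Matrix.smul_apply, Matrix.sub_apply,
      Matrix.one_apply, swapM, smul_eq_mul]
    have e1 : (((p.1, q.2) : Fin d × Fin d).1 = ((p.1, q.2) : Fin d × Fin d).2 ∧
        ((q.1, p.2) : Fin d × Fin d).1 = ((q.1, p.2) : Fin d × Fin d).2) ↔ q = (p.2, p.1) := by
      simp only []
      rw [Prod.ext_iff]
      constructor
      · rintro ⟨h, h'⟩; exact ⟨h', h.symm⟩
      · rintro ⟨h, h'⟩; exact ⟨h'.symm, h⟩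
    have e2 : (((p.1, q.2) : Fin d × Fin d) = ((q.1, p.2) : Fin d × Fin d)) ↔ q = p := by
      rw [Prod.ext_iff, Prod.ext_iff]
      constructor
      · rintro ⟨h, h'⟩; exact ⟨h.symm, h'⟩
      · rintro ⟨h, h'⟩; exact ⟨h.symm, h'⟩
    rw [if_congr e1 rfl rfl, if_congr e2 rfl rfl]
    have hcC : (c:ℂ) = (1 - (F:ℂ)) / ((d:ℂ)^2 - 1) := by
      rw [hc_def]; push_cast; ring
    have haC : (a:ℂ) = ((F:ℂ) - (1 - (F:ℂ))/((d:ℂ)^2-1))/(d:ℂ) := by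
      rw [ha_def, hc_def]; push_cast; ring
    have hcC : (c:ℂ) = (1 - (F:ℂ)) / ((d:ℂ)^2 - 1) := by
      rw [hc_def]; push_cast; ring
    have e3 : ((p : Fin d × Fin d) = q) ↔ q = p := eq_comm
    rw [if_congr e3 rfl rfl]
    split_ifs with h1 h2 h2 <;> rw [haC, hcC] <;> field_simp <;> ring
  set R : Matrix (Fin d × Fin d) (Fin d × Fin d) ℂ := (c:ℂ) • swapM d + (a:ℂ) • 1 with hR_def
  have hRpsd : R.PosSemidef := by
    have h1 : R = (c:ℂ) • (swapM d + 1) + (((a - c : ℝ)):ℂ) • 1 := by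
      rw [hR_def, smul_add]
      push_cast
      module
    rw [h1]
    exact (psd_smul_aux (psd_swap_add_one d) hc).add (psd_smul_aux Matrix.PosSemidef.one hac)
  have hMherm : (ptB ρ)ᴴ = ptB ρ := by
    rw [hM, conjTranspose_add, conjTranspose_smul, conjTranspose_smul, swapM_herm,
      conjTranspose_one]
    have h1 : star ((a:ℝ):ℂ) = ((a:ℝ):ℂ) := by simp [Complex.ext_iff]
    have h2 : star ((c:ℝ):ℂ) = ((c:ℝ):ℂ) := by simp [Complex.ext_iff]
    rw [h1, h2]
  have hsq : R ^ 2 = (ptB ρ)ᴴ * (ptB ρ) := by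
    rw [pow_two, hMherm, hM, hR_def, expand_aux, expand_aux]
    congr 1
    · congr 1
      ring
    · congr 1
      ring
  have hsqrt : (Matrix.posSemidef_conjTranspose_mul_self (ptB ρ)).1.cfc Real.sqrt = R := by
    rw [← Matrix.IsHermitian.cfc_eq, ← hsq]
    have hRsa : IsSelfAdjoint R := hRpsd.1
    have hspec : ∀ x ∈ spectrum ℝ R, 0 ≤ x := by
      intro x hx
      obtain ⟨i, rfl⟩ := hRpsd.1.spectrum_real_eq_range_eigenvalues ▸ hx
      exact hRpsd.eigenvalues_nonneg i
    rw [← cfc_pow_id (R := ℝ) R 2, ← cfc_comp Real.sqrt (fun x : ℝ => x ^ 2) R]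
    conv_rhs => rw [← cfc_id' ℝ R]
    apply cfc_congr
    intro x hx
    exact Real.sqrt_sq (hspec x hx)
  have htrace : R.trace = ((F * (d:ℝ) : ℝ) : ℂ) := by
    rw [hR_def, Matrix.trace_add, Matrix.trace_smul, Matrix.trace_smul, swapM_trace,
      Matrix.trace_one]
    have hreal : c * (d:ℝ) + a * ((d:ℝ) * (d:ℝ)) = F * (d:ℝ) := by
      rw [ha_def]
      field_simp
      ring
    have hcast : ((F * (d:ℝ) : ℝ) : ℂ) = ((c * (d:ℝ) + a * ((d:ℝ) * (d:ℝ)) : ℝ) : ℂ) := by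
      rw [hreal]
    rw [hcast]
    have hcard : (Fintype.card (Fin d × Fin d)) = d * d := by simp
    rw [hcard, smul_eq_mul, smul_eq_mul]
    push_cast
    ring
  have hval : trNorm (ptB ρ) = F * d := by
    unfold trNorm
    have hcf : ((Matrix.posSemidef_conjTranspose_mul_self (ptB ρ)).1.eigenvectorUnitary.1 *
        Matrix.diagonal (((↑) : ℝ → ℂ) ∘ (Real.sqrt ·) ∘
          (Matrix.posSemidef_conjTranspose_mul_self (ptB ρ)).1.eigenvalues) *
        (star (Matrix.posSemidef_conjTranspose_mul_self (ptB ρ)).1.eigenvectorUnitary :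
          Matrix (Fin d × Fin d) (Fin d × Fin d) ℂ)) =
        (Matrix.posSemidef_conjTranspose_mul_self (ptB ρ)).1.cfc Real.sqrt := by
      rw [Matrix.IsHermitian.cfc, Unitary.conjStarAlgAut_apply]
      rfl
    rw [hcf, hsqrt, htrace]
    exact Complex.ofReal_re _
  rw [hval]
end
end

section
/- Suppose Z = (X,Y), i.e. the reference holds a copy of the senders' data. Then any decomposition P_{XY|Z=z}(xy) = q(ℓ|z) P_{J|Z=z,L=ℓ}(j) P_{K|L=ℓ}(k) (under a bijection τ(x,y)=(j,k) ∈ J_ℓ×K_ℓ) in which the K-part is nondegenerate forces each K_ℓ to be a singleton; consequently H(LJ) = H(XY). -/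
open Classical
noncomputable section

/-- if Z = (X,Y), then in any Koashi–Imoto style decomposition
P_{XY|Z=z}(xy) = q(ℓ|z) P_{J|Z=z,L=ℓ}(j) P_{K|L=ℓ}(k) (under a bijection
τ(x,y) = (ℓ,j,k)) with nondegenerate K-part, every K_ℓ is a singleton;
consequently H(LJ) = H(XY). -/
theorem stmt_14 {X Y L : Type*} [Fintype X] [DecidableEq X] [Fintype Y] [DecidableEq Y]
    [Fintype L] (Jf Kf : L → Type*) [∀ l, Fintype (Jf l)] [∀ l, Fintype (Kf l)]
    (τ : (X × Y) ≃ (Σ l : L, Jf l × Kf l))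
    (P : X × Y → ℝ) (hP0 : ∀ s, 0 ≤ P s) (hP1 : ∑ s, P s = 1)
    (q : L → X × Y → ℝ) (PJ : X × Y → (l : L) → Jf l → ℝ) (PK : (l : L) → Kf l → ℝ)
    (hq0 : ∀ l z, 0 ≤ q l z) (hq1 : ∀ z, ∑ l, q l z = 1)
    (hPJ0 : ∀ z l j, 0 ≤ PJ z l j) (hPJ1 : ∀ z l, ∑ j, PJ z l j = 1)
    (hPK0 : ∀ l k, 0 ≤ PK l k) (hPK1 : ∀ l, ∑ k, PK l k = 1)
    -- the decomposition of the δ-distributions P_{XY|Z=z} = δ_z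
    (hdec : ∀ z s : X × Y, (if s = z then (1 : ℝ) else 0)
        = q (τ s).1 z * PJ z (τ s).1 (τ s).2.1 * PK (τ s).1 (τ s).2.2)
    -- nondegeneracy of the K-part
    (hnd : ∀ l, (∃ z, 0 < q l z) ∧ ∀ k : Kf l, 0 < PK l k) :
    (∀ l, ∀ k k' : Kf l, k = k')
    ∧ (∑ s : Σ l : L, Jf l, Real.negMulLog (∑ k, P (τ.symm ⟨s.1, (s.2, k)⟩)))
        = ∑ s, Real.negMulLog (P s) := by
  have hsing : ∀ l, ∀ k k' : Kf l, k = k' := by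
    intro l k k'
    obtain ⟨⟨z, hz⟩, hK⟩ := hnd l
    -- find j with PJ z l j > 0
    have hjex : ∃ j, 0 < PJ z l j := by
      by_contra h
      push_neg at h
      have : ∑ j, PJ z l j = 0 :=
        Finset.sum_eq_zero fun j _ => le_antisymm (h j) (hPJ0 z l j)
      rw [hPJ1 z l] at this; norm_num at this
    obtain ⟨j, hj⟩ := hjex
    have key : ∀ k₀ : Kf l, τ.symm ⟨l, (j, k₀)⟩ = z := by
      intro k₀
      have h := hdec z (τ.symm ⟨l, (j, k₀)⟩)
      rw [Equiv.apply_symm_apply] at h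
      have hpos : 0 < q l z * PJ z l j * PK l k₀ :=
        mul_pos (mul_pos hz hj) (hK k₀)
      by_contra hne
      rw [if_neg hne] at h
      rw [← h] at hpos; exact lt_irrefl _ hpos
    have := (key k).trans (key k').symm
    have := congrArg τ this
    simp only [Equiv.apply_symm_apply] at this
    exact (Prod.ext_iff.mp (eq_of_heq (Sigma.mk.inj_iff.mp this).2)).2
  refine ⟨hsing, ?_⟩
  have hss : ∀ l, Subsingleton (Kf l) := fun l => ⟨hsing l⟩
  have hne : ∀ l, Nonempty (Kf l) := by
    intro l
    by_contra h
    have : IsEmpty (Kf l) := not_nonempty_iff.mp h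
    have := hPK1 l
    rw [Finset.univ_eq_empty, Finset.sum_empty] at this
    norm_num at this
  let k₀ : ∀ l, Kf l := fun l => Classical.choice (hne l)
  have hsum : ∀ (s : Σ l : L, Jf l),
      (∑ k, P (τ.symm ⟨s.1, (s.2, k)⟩)) = P (τ.symm ⟨s.1, (s.2, k₀ s.1)⟩) := by
    intro s
    haveI := hss s.1
    exact Fintype.sum_subsingleton _ (k₀ s.1)
  simp_rw [hsum]
  let e : (Σ l : L, Jf l) ≃ (Σ l : L, Jf l × Kf l) :=
    { toFun := fun s => ⟨s.1, (s.2, k₀ s.1)⟩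
      invFun := fun t => ⟨t.1, t.2.1⟩
      left_inv := fun s => rfl
      right_inv := fun t => by
        cases t with
        | mk l p =>
          cases p with
          | mk j k => exact congrArg (fun k' => (⟨l, (j, k')⟩ : Σ l : L, Jf l × Kf l)) (hsing l (k₀ l) k) }
  calc (∑ s : Σ l : L, Jf l, Real.negMulLog (P (τ.symm ⟨s.1, (s.2, k₀ s.1)⟩)))
      = ∑ t : Σ l : L, Jf l × Kf l, Real.negMulLog (P (τ.symm t)) :=
        (Equiv.sum_comp e fun t => Real.negMulLog (P (τ.symm t)))
    _ = ∑ s, Real.negMulLog (P s) := τ.symm.sum_comp fun s => Real.negMulLog (P s)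
end
end
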